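/- Let M(z) = b/(cz+d) with b, c ≠ 0. The finite fixed points of St_M(z) = z + ((cz+d)² - bc)²/(c(cz+d)³) are exactly z = (-d ± √(bc))/c, each a root of multiplicity 2 of the fixed-point equation; none of them is a zero of M (M has no zeroes), so all finite fixed points of St_M are extraneous with multiplier 1. -/

import Mathlib

open Polynomial in
/-- For `M z = b/(cz+d)` with `b, c ≠ 0` and `s` a square root of `bc`,
the finite fixed points of `St_M z = z + ((cz+d)² - bc)²/(c(cz+d)³)` are
exactly `z = (-d ± s)/c`, each of multiplicity 2 in the fixed-point
equation; none is a zero of `M`, and all have multiplier `1`. -/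
theorem stirling_mobius_a_zero_fixed_points (b c d : ℂ) (hb : b ≠ 0)
    (hc : c ≠ 0) (s : ℂ) (hs : s ^ 2 = b * c) :
    let M : ℂ → ℂ := fun z => b / (c * z + d)
    let St : ℂ → ℂ := fun z =>
      z + ((c * z + d) ^ 2 - b * c) ^ 2 / (c * (c * z + d) ^ 3)
    (∀ z : ℂ, c * z + d ≠ 0 →
        (St z = z ↔ (z = (-d + s) / c ∨ z = (-d - s) / c))) ∧
      (((C c * X + C d) ^ 2 - C (b * c)) ^ 2).rootMultiplicity ((-d + s) / c)
        = 2 ∧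
      (((C c * X + C d) ^ 2 - C (b * c)) ^ 2).rootMultiplicity ((-d - s) / c)
        = 2 ∧
      (∀ z : ℂ, c * z + d ≠ 0 → St z = z → (M z ≠ 0 ∧ deriv St z = 1)) := by
  intro M St
  have hs0 : s ≠ 0 := by
    intro h; rw [h] at hs; exact (mul_ne_zero hb hc) (by simpa using hs.symm)
  set r₁ : ℂ := (-d + s) / c with hr₁
  set r₂ : ℂ := (-d - s) / c with hr₂
  have hcr₁ : c * r₁ + d = s := by
    rw [hr₁, mul_div_assoc', mul_comm c, mul_div_assoc, div_self hc, mul_one]; ring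
  have hcr₂ : c * r₂ + d = -s := by
    rw [hr₂, mul_div_assoc', mul_comm c, mul_div_assoc, div_self hc, mul_one]; ring
  have hr12 : r₁ ≠ r₂ := by
    intro h
    have h2 : c * r₁ + d = c * r₂ + d := by rw [h]
    rw [hcr₁, hcr₂] at h2
    exact hs0 (by linear_combination h2 / 2)
  -- key: fixed point iff numerator zero
  have key : ∀ z : ℂ, c * z + d ≠ 0 →
      (St z = z ↔ (c * z + d) ^ 2 - b * c = 0) := by
    intro z hz
    have hden : c * (c * z + d) ^ 3 ≠ 0 := mul_ne_zero hc (pow_ne_zero _ hz)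
    constructor
    · intro h
      have h2 : ((c * z + d) ^ 2 - b * c) ^ 2 / (c * (c * z + d) ^ 3) = 0 := by
        simp only [St] at h; linear_combination h
      rw [_root_.div_eq_zero_iff] at h2
      rcases h2 with h2 | h2
      · exact pow_eq_zero_iff (by norm_num) |>.mp h2
      · exact absurd h2 hden
    · intro h
      simp only [St, h]
      simp
  -- factorization of the polynomial
  have hX1 : C c * (X - C r₁) = C c * X + C d - C s := by
    have h1 : c * r₁ = s - d := by linear_combination hcr₁
    rw [mul_sub, ← C_mul, h1]
    simp only [C_sub]
    ring
  have hX2 : C c * (X - C r₂) = C c * X + C d + C s := by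
    have h2 : c * r₂ = -s - d := by linear_combination hcr₂
    rw [mul_sub, ← C_mul, h2]
    simp only [C_sub, C_neg]
    ring
  have hfacP : ((C c * X + C d) ^ 2 - C (b * c)) ^ 2
      = C (c ^ 4) * ((X - C r₁) ^ 2 * (X - C r₂) ^ 2) := by
    have hbc : (C (b * c) : ℂ[X]) = C s ^ 2 := by rw [← hs]; simp
    calc ((C c * X + C d) ^ 2 - C (b * c)) ^ 2
        = ((C c * X + C d - C s) * (C c * X + C d + C s)) ^ 2 := by
          rw [hbc]; ring
      _ = ((C c * (X - C r₁)) * (C c * (X - C r₂))) ^ 2 := by rw [hX1, hX2]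
      _ = C (c ^ 4) * ((X - C r₁) ^ 2 * (X - C r₂) ^ 2) := by
          simp only [C_pow]; ring
  have hmult : ∀ (u v : ℂ), u ≠ v →
      (C (c ^ 4) * ((X - C u) ^ 2 * (X - C v) ^ 2)).rootMultiplicity u = 2 := by
    intro u v huv
    have hC : (C (c ^ 4) : ℂ[X]) ≠ 0 := by
      simpa using pow_ne_zero 4 hc
    have h1 : ((X - C u) ^ 2 : ℂ[X]) ≠ 0 := pow_ne_zero _ (X_sub_C_ne_zero u)
    have h2 : ((X - C v) ^ 2 : ℂ[X]) ≠ 0 := pow_ne_zero _ (X_sub_C_ne_zero v)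
    have hnr : ¬ IsRoot ((X - C v) ^ 2) u := by
      simp only [IsRoot, eval_pow, eval_sub, eval_X, eval_C]
      intro h
      have h3 : u - v = 0 := pow_eq_zero_iff (n := 2) (by norm_num) |>.mp h
      exact huv (sub_eq_zero.mp h3)
    rw [rootMultiplicity_mul (mul_ne_zero hC (mul_ne_zero h1 h2)),
        rootMultiplicity_mul (mul_ne_zero h1 h2),
        rootMultiplicity_C, rootMultiplicity_X_sub_C_pow,
        rootMultiplicity_eq_zero hnr]
  refine ⟨?_, ?_, ?_, ?_⟩
  · -- fixed points
    intro z hz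
    rw [key z hz]
    constructor
    · intro h
      have hfac : (c * z + d - s) * (c * z + d + s) = 0 := by
        linear_combination h - hs
      rcases mul_eq_zero.mp hfac with h' | h'
      · left; rw [hr₁]; field_simp; linear_combination h'
      · right; rw [hr₂]; field_simp; linear_combination h'
    · rintro (h | h)
      · rw [h, hcr₁]; linear_combination hs
      · rw [h, hcr₂]; linear_combination hs
  · rw [hfacP]; exact hmult r₁ r₂ hr12
  · rw [hfacP]
    have := hmult r₂ r₁ hr12.symm
    rw [show (X - C r₁) ^ 2 * (X - C r₂) ^ 2 = (X - C r₂) ^ 2 * (X - C r₁) ^ 2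
      from by ring]
    exact this
  · -- extraneous with multiplier 1
    intro z hz hfix
    refine ⟨div_ne_zero hb hz, ?_⟩
    have hzero : (c * z + d) ^ 2 - b * c = 0 := (key z hz).mp hfix
    have hu : HasDerivAt (fun w : ℂ => c * w + d) c z := by
      simpa using ((hasDerivAt_id z).const_mul c).add_const d
    have hn : HasDerivAt (fun w : ℂ => ((c * w + d) ^ 2 - b * c) ^ 2)
        ((2 : ℕ) * ((c * z + d) ^ 2 - b * c) ^ 1 *
          ((2 : ℕ) * (c * z + d) ^ 1 * c)) z :=
      ((hu.pow 2).sub_const (b * c)).pow 2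
    have hD : HasDerivAt (fun w : ℂ => c * (c * w + d) ^ 3)
        (c * ((3 : ℕ) * (c * z + d) ^ 2 * c)) z := by
      simpa [mul_comm, mul_assoc, mul_left_comm] using (hu.pow 3).const_mul c
    have hden : c * (c * z + d) ^ 3 ≠ 0 := mul_ne_zero hc (pow_ne_zero _ hz)
    have hf := hn.div hD hden
    have hSt : HasDerivAt St
        (1 + (((2 : ℕ) * ((c * z + d) ^ 2 - b * c) ^ 1 *
            ((2 : ℕ) * (c * z + d) ^ 1 * c)) * (c * (c * z + d) ^ 3)
          - ((c * z + d) ^ 2 - b * c) ^ 2 * (c * ((3 : ℕ) * (c * z + d) ^ 2 * c)))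
          / (c * (c * z + d) ^ 3) ^ 2) z := (hasDerivAt_id z).add hf
    rw [hSt.deriv]
    rw [hzero]
    simp
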